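/- Let P₀, P₁ be Borel probability measures supported on a bounded set Z ⊂ ℝ^m, and suppose d_sig(P₀,P₁) < ε for some ε > 0. Then there exist constants c₁, c₂ > 0, not depending on ε or on the multi-index, such that for every multi-index r = (r₁,…,r_m) ∈ ℕ₀^m, |∫ z^r dP₀(z) − ∫ z^r dP₁(z)| < c₁ · c₂^{|r|₁} · ε, where z^r = z₁^{r₁}⋯z_m^{r_m} and |r|₁ = r₁ + ⋯ + r_m. -/

import Mathlib

open MeasureTheory Filter

/-- The sigmoid function `σ(t) = 1/(1 + e^{-t})`. -/
noncomputable def sigmoid (t : ℝ) : ℝ := 1 / (1 + Real.exp (-t))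

lemma one_add_exp_pos (t : ℝ) : 0 < 1 + Real.exp (-t) := by positivity

lemma sigmoid_nonneg (t : ℝ) : 0 ≤ sigmoid t := by
  unfold sigmoid; positivity

lemma sigmoid_le_one (t : ℝ) : sigmoid t ≤ 1 := by
  rw [sigmoid, div_le_one (one_add_exp_pos t)]
  nlinarith [Real.exp_pos (-t)]

lemma abs_sigmoid_le_one (t : ℝ) : |sigmoid t| ≤ 1 :=
  abs_le.mpr ⟨by linarith [sigmoid_nonneg t], sigmoid_le_one t⟩

lemma continuous_sigmoid' : Continuous sigmoid := by
  apply continuous_const.div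
  · exact continuous_const.add (Real.continuous_exp.comp continuous_neg)
  · exact fun t => ne_of_gt (one_add_exp_pos t)

lemma tendsto_sigmoid_atTop : Tendsto sigmoid atTop (nhds 1) := by
  have h : Tendsto (fun t : ℝ => 1 + Real.exp (-t)) atTop (nhds (1 + 0)) :=
    tendsto_const_nhds.add (Real.tendsto_exp_atBot.comp tendsto_neg_atTop_atBot)
  rw [add_zero] at h
  have h2 : Tendsto (fun t : ℝ => 1 / (1 + Real.exp (-t))) atTop (nhds (1 / 1)) :=
    Tendsto.div tendsto_const_nhds h (by norm_num)
  have hs : sigmoid = fun t : ℝ => 1 / (1 + Real.exp (-t)) := rfl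
  rw [hs]
  simpa using h2

lemma tendsto_sigmoid_atBot : Tendsto sigmoid atBot (nhds 0) := by
  have h : Tendsto (fun t : ℝ => 1 + Real.exp (-t)) atBot atTop := by
    apply tendsto_atTop_add_const_left
    exact Real.tendsto_exp_atTop.comp tendsto_neg_atBot_atTop
  have h2 := h.inv_tendsto_atTop
  have h3 : (fun t : ℝ => (1 + Real.exp (-t))⁻¹) = sigmoid := by
    funext t; rw [sigmoid, one_div]
  rw [← h3]
  simpa [Pi.inv_def] using h2

lemma tendsto_sigmoid_scale {t a : ℝ} (h : a < t) :
    Tendsto (fun k : ℕ => sigmoid ((k : ℝ) * t - k * a)) atTop (nhds 1) := by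
  have harg : Tendsto (fun k : ℕ => (k : ℝ) * t - k * a) atTop atTop := by
    have h1 : Tendsto (fun k : ℕ => (k : ℝ) * (t - a)) atTop atTop :=
      (tendsto_natCast_atTop_atTop (R := ℝ)).atTop_mul_const' (by linarith)
    refine h1.congr fun k => by ring
  exact tendsto_sigmoid_atTop.comp harg

lemma tendsto_sigmoid_scale' {t a : ℝ} (h : t < a) :
    Tendsto (fun k : ℕ => sigmoid ((k : ℝ) * t - k * a)) atTop (nhds 0) := by
  have harg : Tendsto (fun k : ℕ => (k : ℝ) * t - k * a) atTop atBot := by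
    have h1 : Tendsto (fun k : ℕ => (k : ℝ) * (t - a)) atTop atBot :=
      (tendsto_natCast_atTop_atTop (R := ℝ)).atTop_mul_const_of_neg' (by linarith)
    refine h1.congr fun k => by ring
  exact tendsto_sigmoid_atBot.comp harg

/-- Layer-cake type limit: the smoothed layer-cake integral converges to `t^n - (-B)^n`. -/
lemma tendsto_layercake {B : ℝ} (hB : 0 < B) {n : ℕ} (hn : 1 ≤ n) {t : ℝ} (ht : |t| ≤ B) :
    Tendsto (fun k : ℕ => ∫ a in Set.Ioc (-B) B,
        (n : ℝ) * a ^ (n - 1) * sigmoid ((k : ℝ) * t - k * a))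
      atTop (nhds (t ^ n - (-B) ^ n)) := by
  set ν := (volume : Measure ℝ).restrict (Set.Ioc (-B) B) with hν
  set G : ℝ → ℝ := fun a => Set.indicator (Set.Iio t) (fun a => (n : ℝ) * a ^ (n-1)) a with hG
  have hae : ∀ᵐ a ∂ν, a ∈ Set.Ioc (-B) B ∧ a ≠ t := by
    have h1 : ∀ᵐ a ∂ν, a ∈ Set.Ioc (-B) B := ae_restrict_mem measurableSet_Ioc
    have h2 : ∀ᵐ a ∂ν, a ≠ t := by
      rw [ae_iff]
      have : {a : ℝ | ¬ a ≠ t} = {t} := by ext a; simp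
      rw [this]
      exact le_antisymm (le_trans (Measure.restrict_le_self _) (by simp)) zero_le
    exact h1.and h2
  have key : Tendsto (fun k : ℕ => ∫ a, (n : ℝ) * a ^ (n - 1) * sigmoid ((k : ℝ) * t - k * a) ∂ν)
      atTop (nhds (∫ a, G a ∂ν)) := by
    apply tendsto_integral_of_dominated_convergence (fun _ => (n : ℝ) * B ^ (n-1))
    · intro k
      apply Continuous.aestronglyMeasurable
      exact (continuous_const.mul (continuous_pow _)).mul
        (continuous_sigmoid'.comp ((continuous_const.mul continuous_const).sub
          (continuous_const.mul continuous_id)))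
    · exact integrable_const _
    · intro k
      filter_upwards [hae] with a ha
      have haB : |a| ≤ B := abs_le.mpr ⟨le_of_lt ha.1.1, ha.1.2⟩
      rw [Real.norm_eq_abs, abs_mul, abs_mul, abs_pow, abs_of_nonneg (Nat.cast_nonneg n)]
      have h3 : |a| ^ (n-1) ≤ B ^ (n-1) := pow_le_pow_left₀ (abs_nonneg a) haB _
      calc (n:ℝ) * |a|^(n-1) * |sigmoid ((k:ℝ)*t - k*a)| ≤ (n:ℝ) * B^(n-1) * 1 :=
            mul_le_mul (by gcongr) (abs_sigmoid_le_one _) (abs_nonneg _) (by positivity)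
        _ = (n:ℝ) * B^(n-1) := mul_one _
    · filter_upwards [hae] with a ha
      rcases lt_or_gt_of_ne ha.2 with hlt | hgt
      · -- a < t : sigmoid → 1, G a = n a^{n-1}
        have hGa : G a = (n : ℝ) * a ^ (n-1) := Set.indicator_of_mem (Set.mem_Iio.mpr hlt) _
        rw [hGa]
        have := (tendsto_sigmoid_scale hlt).const_mul ((n:ℝ) * a ^ (n-1))
        simpa [mul_assoc] using this
      · have hGa : G a = 0 := Set.indicator_of_notMem (by simp [Set.mem_Iio]; linarith) _
        rw [hGa]
        have := (tendsto_sigmoid_scale' hgt).const_mul ((n:ℝ) * a ^ (n-1))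
        simpa [mul_assoc] using this
  have hval : (∫ a, G a ∂ν) = t ^ n - (-B) ^ n := by
    rw [hG, integral_indicator measurableSet_Iio]
    have hres : ν.restrict (Set.Iio t) = (volume : Measure ℝ).restrict (Set.Iio t ∩ Set.Ioc (-B) B) := by
      rw [hν, Measure.restrict_restrict measurableSet_Iio]
    have hset : Set.Iio t ∩ Set.Ioc (-B) B = Set.Ioo (-B) t := by
      ext a
      simp only [Set.mem_inter_iff, Set.mem_Iio, Set.mem_Ioc, Set.mem_Ioo]
      have htB : t ≤ B := le_trans (le_abs_self t) ht
      constructor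
      · rintro ⟨h1, h2, h3⟩; exact ⟨h2, h1⟩
      · rintro ⟨h1, h2⟩; exact ⟨h2, h1, le_trans (le_of_lt h2) htB⟩
    rw [← integral_indicator measurableSet_Iio, integral_indicator measurableSet_Iio, hres, hset]
    have h1 : (∫ a in Set.Ioo (-B) t, (n:ℝ) * a ^ (n-1)) = ∫ a in Set.Ioc (-B) t, (n:ℝ) * a ^ (n-1) :=
      (integral_Ioc_eq_integral_Ioo).symm
    rw [h1]
    have hle : -B ≤ t := by
      have := abs_le.mp ht; linarith [this.1]
    rw [← intervalIntegral.integral_of_le hle]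
    have h2 : (∫ a in (-B)..t, (n:ℝ) * a ^ (n-1)) = (n:ℝ) * ((t^((n-1)+1) - (-B)^((n-1)+1)) / (((n-1):ℕ)+1:ℝ)) := by
      rw [intervalIntegral.integral_const_mul, integral_pow]
    rw [h2]
    have h3 : (n - 1) + 1 = n := Nat.succ_pred_eq_of_pos hn
    rw [h3]
    have h4 : (((n-1 : ℕ) : ℝ) + 1) = (n : ℝ) := by
      push_cast [Nat.cast_sub hn]; ring
    rw [h4]
    have hn0 : (n:ℝ) ≠ 0 := Nat.cast_ne_zero.mpr (by omega)
    field_simp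
  rw [← hval]
  exact key


section Polarization
open Finset

lemma neg_one_pow_sub_real {k t : ℕ} (ht : t ≤ k) :
    (-1 : ℝ) ^ (k - t) = (-1) ^ k * (-1) ^ t := by
  have h2 : ((-1:ℝ)^t) * ((-1)^t) = 1 := by
    rw [← pow_add]; exact Even.neg_one_pow ⟨t, rfl⟩
  calc (-1:ℝ)^(k-t) = (-1)^(k-t) * ((-1)^t * (-1)^t) := by rw [h2, mul_one]
    _ = ((-1)^(k-t) * (-1)^t) * (-1)^t := by ring
    _ = (-1)^k * (-1)^t := by rw [pow_sub_mul_pow _ ht]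

lemma polarization {ι : Type*} [Fintype ι] [DecidableEq ι] (x : ι → ℝ) :
    (Nat.factorial (Fintype.card ι) : ℝ) * ∏ j, x j =
      ∑ S : Finset ι, (-1 : ℝ) ^ (Fintype.card ι - S.card) * (∑ j ∈ S, x j) ^ (Fintype.card ι) := by
  classical
  set n := Fintype.card ι with hn
  have expand : ∀ S : Finset ι, (∑ j ∈ S, x j) ^ n
      = ∑ p ∈ Fintype.piFinset (fun _ : Fin n => (univ : Finset ι)),
          ∏ i, (if p i ∈ S then x (p i) else 0) := by
    intro S
    have h1 : (∑ j ∈ S, x j) = ∑ j : ι, (if j ∈ S then x j else 0) := by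
      rw [Finset.sum_ite_mem]; simp
    rw [h1, Finset.sum_pow']
  have prod_ite : ∀ (S : Finset ι) (p : Fin n → ι),
      (∏ i, (if p i ∈ S then x (p i) else 0))
        = if (Finset.image p univ ⊆ S) then ∏ i, x (p i) else 0 := by
    intro S p
    by_cases h : Finset.image p univ ⊆ S
    · rw [if_pos h]
      refine Finset.prod_congr rfl fun i _ => ?_
      rw [if_pos (h (Finset.mem_image_of_mem p (mem_univ i)))]
    · rw [if_neg h]
      obtain ⟨i, hi⟩ : ∃ i : Fin n, p i ∉ S := by
        by_contra hc
        push_neg at hc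
        exact h (by intro j hj; obtain ⟨i, _, rfl⟩ := Finset.mem_image.mp hj; exact hc i)
      exact Finset.prod_eq_zero (mem_univ i) (by rw [if_neg hi])
  -- inner inclusion-exclusion sum
  have inner : ∀ p : Fin n → ι,
      (∑ S : Finset ι, (-1:ℝ) ^ (n - S.card) * (if Finset.image p univ ⊆ S then 1 else 0))
        = if Finset.image p univ = univ then 1 else 0 := by
    intro p
    set A := Finset.image p univ with hA
    have hAn : A.card ≤ n := by rw [hn]; exact Finset.card_le_univ A
    have step1 : (∑ S : Finset ι, (-1:ℝ) ^ (n - S.card) * (if A ⊆ S then 1 else 0))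
        = ∑ S ∈ Finset.univ.filter (fun S => A ⊆ S), (-1:ℝ) ^ (n - S.card) := by
      rw [Finset.sum_filter]
      refine Finset.sum_congr rfl fun S _ => ?_
      by_cases h : A ⊆ S <;> simp [h]
    have step2 : (∑ S ∈ Finset.univ.filter (fun S => A ⊆ S), (-1:ℝ) ^ (n - S.card))
        = ∑ T ∈ Aᶜ.powerset, (-1:ℝ) ^ (n - (A ∪ T).card) := by
      refine Finset.sum_nbij' (fun S => S \ A) (fun T => A ∪ T) ?_ ?_ ?_ ?_ ?_
      · intro S hS
        rw [Finset.mem_filter] at hS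
        rw [Finset.mem_powerset]
        intro a ha
        rw [Finset.mem_sdiff] at ha
        simpa using ha.2
      · intro T hT
        rw [Finset.mem_powerset] at hT
        simp [Finset.subset_union_left]
      · intro S hS
        rw [Finset.mem_filter] at hS
        exact Finset.union_sdiff_of_subset hS.2
      · intro T hT
        rw [Finset.mem_powerset] at hT
        apply Finset.union_sdiff_cancel_left
        exact Finset.disjoint_left.mpr fun a haA haT => absurd haA (by simpa using hT haT)
      · intro S hS
        rw [Finset.mem_filter] at hS
        rw [Finset.union_sdiff_of_subset hS.2]
    have step3 : (∑ T ∈ Aᶜ.powerset, (-1:ℝ) ^ (n - (A ∪ T).card))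
        = (-1:ℝ)^(n - A.card) * ∑ T ∈ Aᶜ.powerset, (-1:ℝ) ^ T.card := by
      rw [Finset.mul_sum]
      refine Finset.sum_congr rfl fun T hT => ?_
      rw [Finset.mem_powerset] at hT
      have hdisj : Disjoint A T := Finset.disjoint_left.mpr fun a haA haT => absurd haA (by simpa using hT haT)
      rw [Finset.card_union_of_disjoint hdisj]
      have hT' : T.card ≤ n - A.card := by
        have := Finset.card_le_card hT
        rw [Finset.card_compl] at this
        omega
      rw [Nat.sub_add_eq]
      rw [neg_one_pow_sub_real hT']
    have step4 : (∑ T ∈ Aᶜ.powerset, (-1:ℝ) ^ T.card) = if Aᶜ = ∅ then 1 else 0 := by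
      have h := Finset.sum_powerset_neg_one_pow_card (x := Aᶜ)
      have h2 : ((∑ T ∈ Aᶜ.powerset, (-1:ℤ) ^ T.card : ℤ) : ℝ)
          = ∑ T ∈ Aᶜ.powerset, (-1:ℝ) ^ T.card := by push_cast; rfl
      rw [← h2, h]
      by_cases hc : Aᶜ = ∅ <;> simp [hc]
    rw [step1, step2, step3, step4]
    by_cases h : A = univ
    · have : Aᶜ = ∅ := by rw [h]; simp
      rw [if_pos this, if_pos h, h]
      rw [Finset.card_univ, ← hn]
      simp
    · have : ¬ Aᶜ = ∅ := by
        intro hc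
        exact h (by simpa using congrArg (·ᶜ) hc)
      rw [if_neg this, if_neg h, mul_zero]
  -- main computation
  symm
  calc (∑ S : Finset ι, (-1 : ℝ) ^ (n - S.card) * (∑ j ∈ S, x j) ^ n)
      = ∑ S : Finset ι, ∑ p ∈ Fintype.piFinset (fun _ : Fin n => (univ : Finset ι)),
          (-1:ℝ) ^ (n - S.card) * (if Finset.image p univ ⊆ S then ∏ i, x (p i) else 0) := by
        refine Finset.sum_congr rfl fun S _ => ?_
        rw [expand S, Finset.mul_sum]
        exact Finset.sum_congr rfl fun p _ => by rw [prod_ite]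
    _ = ∑ p ∈ Fintype.piFinset (fun _ : Fin n => (univ : Finset ι)),
          (∏ i, x (p i)) * ∑ S : Finset ι, (-1:ℝ) ^ (n - S.card) *
            (if Finset.image p univ ⊆ S then 1 else 0) := by
        rw [Finset.sum_comm]
        refine Finset.sum_congr rfl fun p _ => ?_
        rw [Finset.mul_sum]
        refine Finset.sum_congr rfl fun S _ => ?_
        by_cases h : Finset.image p univ ⊆ S <;> simp [h] <;> ring
    _ = ∑ p ∈ Fintype.piFinset (fun _ : Fin n => (univ : Finset ι)),
          (∏ i, x (p i)) * (if Finset.image p univ = univ then 1 else 0) := by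
        refine Finset.sum_congr rfl fun p _ => by rw [inner p]
    _ = ∑ p ∈ (Fintype.piFinset (fun _ : Fin n => (univ : Finset ι))).filter
          (fun p => Finset.image p univ = univ), (∏ i, x (p i)) := by
        rw [Finset.sum_filter]
        refine Finset.sum_congr rfl fun p _ => ?_
        by_cases h : Finset.image p univ = univ <;> simp [h]
    _ = ∑ _e : Fin n ≃ ι, ∏ j, x j := by
        symm
        refine Finset.sum_bij (fun (e : Fin n ≃ ι) _ => (e : Fin n → ι)) ?_ ?_ ?_ ?_
        · intro e _
          rw [Finset.mem_filter]
          constructor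
          · simp [Fintype.mem_piFinset]
          · ext j
            simp only [Finset.mem_image, Finset.mem_univ, iff_true]
            exact ⟨e.symm j, by simp⟩
        · intro e₁ _ e₂ _ h
          exact Equiv.coe_fn_injective h
        · intro p hp
          rw [Finset.mem_filter] at hp
          have hsurj : Function.Surjective p := by
            intro j
            have : j ∈ Finset.image p univ := by rw [hp.2]; exact mem_univ j
            obtain ⟨i, _, hi⟩ := Finset.mem_image.mp this
            exact ⟨i, hi⟩
          have hbij : Function.Bijective p := by
            rw [Fintype.bijective_iff_surjective_and_card]
            exact ⟨hsurj, by simp [hn]⟩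
          exact ⟨Equiv.ofBijective p hbij, Finset.mem_univ _, rfl⟩
        · intro e _
          exact (Fintype.prod_bijective e e.bijective _ _ (fun i => rfl)).symm
    _ = (Nat.factorial n : ℝ) * ∏ j, x j := by
        rw [Finset.sum_const, Finset.card_univ]
        rw [Fintype.card_equiv (Fintype.equivFinOfCardEq (by simp [hn])).symm]
        simp [hn, nsmul_eq_mul]

end Polarization

/-- The sigmoid IPM between two measures on `ℝ^m`. -/
noncomputable def sigmoidIPM {m : ℕ} (P₀ P₁ : Measure (Fin m → ℝ)) : ℝ :=
  ⨆ p : (Fin m → ℝ) × ℝ,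
    |(∫ z, sigmoid ((∑ i, p.1 i * z i) + p.2) ∂P₀) -
      ∫ z, sigmoid ((∑ i, p.1 i * z i) + p.2) ∂P₁|

lemma abs_int_sigmoid_le (P : Measure (Fin m → ℝ)) [IsProbabilityMeasure P] (f : (Fin m → ℝ) → ℝ) :
    |∫ z, sigmoid (f z) ∂P| ≤ 1 := by
  have h := norm_integral_le_of_norm_le_const (μ := P) (f := fun z => sigmoid (f z)) (C := 1)
    (Eventually.of_forall fun z => by rw [Real.norm_eq_abs]; exact abs_sigmoid_le_one _)
  simpa using h

lemma abs_sig_diff_le {m : ℕ} (P₀ P₁ : Measure (Fin m → ℝ))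
    [IsProbabilityMeasure P₀] [IsProbabilityMeasure P₁] (w : Fin m → ℝ) (b : ℝ) :
    |(∫ z, sigmoid ((∑ i, w i * z i) + b) ∂P₀) - ∫ z, sigmoid ((∑ i, w i * z i) + b) ∂P₁|
      ≤ sigmoidIPM P₀ P₁ := by
  apply le_ciSup (f := fun p : (Fin m → ℝ) × ℝ =>
    |(∫ z, sigmoid ((∑ i, p.1 i * z i) + p.2) ∂P₀) -
      ∫ z, sigmoid ((∑ i, p.1 i * z i) + p.2) ∂P₁|) (c := (w, b))
  refine ⟨2, ?_⟩
  rintro x ⟨p, rfl⟩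
  calc |(∫ z, sigmoid ((∑ i, p.1 i * z i) + p.2) ∂P₀) -
      ∫ z, sigmoid ((∑ i, p.1 i * z i) + p.2) ∂P₁|
      ≤ |∫ z, sigmoid ((∑ i, p.1 i * z i) + p.2) ∂P₀| +
        |∫ z, sigmoid ((∑ i, p.1 i * z i) + p.2) ∂P₁| := abs_sub _ _
    _ ≤ 1 + 1 := add_le_add (abs_int_sigmoid_le _ _) (abs_int_sigmoid_le _ _)
    _ = 2 := by norm_num

lemma pow_moment_bound {m : ℕ} {Z : Set (Fin m → ℝ)}
    (P₀ P₁ : Measure (Fin m → ℝ)) [IsProbabilityMeasure P₀] [IsProbabilityMeasure P₁]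
    (hP₀ : P₀ Zᶜ = 0) (hP₁ : P₁ Zᶜ = 0) (θ : Fin m → ℝ) {B : ℝ} (hB : 0 < B)
    (hZB : ∀ z ∈ Z, |∑ i, θ i * z i| ≤ B) {n : ℕ} (hn : 1 ≤ n) {ε : ℝ} (hε : 0 < ε)
    (hd : sigmoidIPM P₀ P₁ < ε) :
    |(∫ z, (∑ i, θ i * z i) ^ n ∂P₀) - ∫ z, (∑ i, θ i * z i) ^ n ∂P₁|
      ≤ 2 * n * B ^ n * ε := by
  set T : (Fin m → ℝ) → ℝ := fun z => ∑ i, θ i * z i with hT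
  have hTc : Continuous T := by
    apply continuous_finset_sum
    exact fun i _ => continuous_const.mul (continuous_apply i)
  set ν := (volume : Measure ℝ).restrict (Set.Ioc (-B) B) with hν
  have hνfin : IsFiniteMeasure ν := by
    constructor
    rw [hν, Measure.restrict_apply_univ, Real.volume_Ioc]
    exact ENNReal.ofReal_lt_top
  have hνuniv : (ν Set.univ).toReal = 2 * B := by
    rw [hν, Measure.restrict_apply_univ, Real.volume_Ioc, ENNReal.toReal_ofReal (by linarith)]
    ring
  set f : ℕ → (Fin m → ℝ) → ℝ → ℝ :=
    fun k z a => (n : ℝ) * a ^ (n - 1) * sigmoid ((k : ℝ) * T z - k * a) with hf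
  -- continuity of the uncurried integrand
  have hfc : ∀ k, Continuous (Function.uncurry (f k)) := by
    intro k
    apply Continuous.mul
    · exact continuous_const.mul (continuous_snd.pow _)
    · exact continuous_sigmoid'.comp
        ((continuous_const.mul (hTc.comp continuous_fst)).sub (continuous_const.mul continuous_snd))
  -- a.e. bound on the product space
  have haeprod : ∀ (P : Measure (Fin m → ℝ)) [IsProbabilityMeasure P],
      ∀ᵐ q : (Fin m → ℝ) × ℝ ∂(P.prod ν), q.2 ∈ Set.Ioc (-B) B := by
    intro P _
    have heq : P.prod ν = (P.prod volume).restrict (Set.univ ×ˢ Set.Ioc (-B) B) := by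
      rw [← Measure.prod_restrict, Measure.restrict_univ]
    rw [heq]
    filter_upwards [ae_restrict_mem (MeasurableSet.univ.prod measurableSet_Ioc)] with q hq
    exact hq.2
  have hbound : ∀ (k : ℕ) (z : Fin m → ℝ) (a : ℝ), a ∈ Set.Ioc (-B) B →
      ‖f k z a‖ ≤ (n : ℝ) * B ^ (n - 1) := by
    intro k z a ha
    have haB : |a| ≤ B := abs_le.mpr ⟨le_of_lt ha.1, ha.2⟩
    rw [hf, Real.norm_eq_abs, abs_mul, abs_mul, abs_pow, abs_of_nonneg (Nat.cast_nonneg n)]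
    calc (n:ℝ) * |a|^(n-1) * |sigmoid ((k:ℝ) * T z - k*a)| ≤ (n:ℝ) * B^(n-1) * 1 :=
          mul_le_mul (by gcongr) (abs_sigmoid_le_one _) (abs_nonneg _) (by positivity)
      _ = (n:ℝ) * B^(n-1) := mul_one _
  have hint : ∀ (k : ℕ) (P : Measure (Fin m → ℝ)) [IsProbabilityMeasure P],
      Integrable (Function.uncurry (f k)) (P.prod ν) := by
    intro k P hP
    refine Integrable.mono' (integrable_const ((n:ℝ) * B ^ (n-1))) ((hfc k).aestronglyMeasurable) ?_
    filter_upwards [haeprod P] with q hq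
    exact hbound k q.1 q.2 hq
  -- the inner integral (in a) and its uniform bound
  have hinner_bdd : ∀ (k : ℕ) (z : Fin m → ℝ),
      ‖∫ a, f k z a ∂ν‖ ≤ ((n : ℝ) * B ^ (n-1)) * (2 * B) := by
    intro k z
    have h := norm_integral_le_of_norm_le_const (μ := ν) (f := fun a => f k z a)
      (C := (n:ℝ) * B ^ (n-1)) ?_
    · rwa [measureReal_def, hνuniv] at h
    · filter_upwards [ae_restrict_mem measurableSet_Ioc] with a ha
      exact hbound k z a ha
  -- Fubini: difference of the inner-integral integrals equals the a-integral of the sig-diff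
  have hswap : ∀ (k : ℕ) (P : Measure (Fin m → ℝ)) [IsProbabilityMeasure P],
      (∫ z, (∫ a, f k z a ∂ν) ∂P)
        = ∫ a, ((n:ℝ) * a ^ (n-1)) * (∫ z, sigmoid ((k:ℝ) * T z - k * a) ∂P) ∂ν := by
    intro k P hP
    rw [MeasureTheory.integral_integral_swap (hint k P)]
    refine integral_congr_ae (Eventually.of_forall fun a => ?_)
    rw [hf]
    simp only []
    rw [MeasureTheory.integral_const_mul]
  -- per-k bound on the difference
  have hdk : ∀ k : ℕ, |(∫ z, (∫ a, f k z a ∂ν) ∂P₀) - (∫ z, (∫ a, f k z a ∂ν) ∂P₁)|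
      ≤ ((n:ℝ) * B^(n-1) * ε) * (2*B) := by
    intro k
    have hI : ∀ (P : Measure (Fin m → ℝ)) [IsProbabilityMeasure P],
        Integrable (fun a => ((n:ℝ) * a^(n-1)) * ∫ z, sigmoid ((k:ℝ) * T z - k * a) ∂P) ν := by
      intro P hP
      refine ((hint k P).integral_prod_right).congr (Eventually.of_forall fun a => ?_)
      rw [hf]
      simp only [Function.uncurry]
      rw [MeasureTheory.integral_const_mul]
    rw [hswap k P₀, hswap k P₁, ← integral_sub (hI P₀) (hI P₁)]
    have h := norm_integral_le_of_norm_le_const (μ := ν) (C := (n:ℝ) * B^(n-1) * ε)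
      (f := fun a => ((n:ℝ) * a^(n-1)) * (∫ z, sigmoid ((k:ℝ) * T z - k * a) ∂P₀)
        - ((n:ℝ) * a^(n-1)) * (∫ z, sigmoid ((k:ℝ) * T z - k * a) ∂P₁)) ?_
    · rw [measureReal_def, hνuniv] at h
      simpa using h
    · filter_upwards [ae_restrict_mem measurableSet_Ioc] with a ha
      have haB : |a| ≤ B := abs_le.mpr ⟨le_of_lt ha.1, ha.2⟩
      have hrw : ∀ (P : Measure (Fin m → ℝ)), (∫ z, sigmoid ((k:ℝ) * T z - k * a) ∂P)
          = ∫ z, sigmoid ((∑ i, ((k:ℝ) * θ i) * z i) + (-(k*a))) ∂P := by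
        intro P
        congr 1
        funext z
        congr 1
        rw [hT]
        simp only []
        rw [Finset.mul_sum, sub_eq_add_neg]
        congr 1
        exact Finset.sum_congr rfl fun i _ => (mul_assoc _ _ _).symm
      have hsd : |(∫ z, sigmoid ((k:ℝ) * T z - k * a) ∂P₀)
          - ∫ z, sigmoid ((k:ℝ) * T z - k * a) ∂P₁| ≤ ε := by
        rw [hrw P₀, hrw P₁]
        exact le_trans (abs_sig_diff_le P₀ P₁ (fun i => (k:ℝ) * θ i) (-(k*a))) (le_of_lt hd)
      rw [Real.norm_eq_abs, ← mul_sub, abs_mul]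
      have hca : |(n:ℝ) * a^(n-1)| ≤ (n:ℝ) * B^(n-1) := by
        rw [abs_mul, abs_of_nonneg (Nat.cast_nonneg n), abs_pow]
        gcongr
      calc |(n:ℝ) * a^(n-1)| * |(∫ z, sigmoid ((k:ℝ) * T z - k * a) ∂P₀)
            - ∫ z, sigmoid ((k:ℝ) * T z - k * a) ∂P₁|
          ≤ ((n:ℝ) * B^(n-1)) * ε := mul_le_mul hca hsd (abs_nonneg _) (by positivity)
        _ = (n:ℝ) * B^(n-1) * ε := by ring
  -- limits as k → ∞
  have hlim : ∀ (P : Measure (Fin m → ℝ)) [IsProbabilityMeasure P], P Zᶜ = 0 →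
      Tendsto (fun k : ℕ => ∫ z, (∫ a, f k z a ∂ν) ∂P) atTop
        (nhds ((∫ z, (T z)^n ∂P) - (-B)^n)) := by
    intro P hP hPZ
    have haeZ : ∀ᵐ z ∂P, z ∈ Z := by
      rw [ae_iff]
      exact hPZ
    have hTn : Integrable (fun z => (T z)^n) P := by
      refine Integrable.mono' (integrable_const (B^n)) ((hTc.pow n).aestronglyMeasurable) ?_
      filter_upwards [haeZ] with z hz
      rw [Real.norm_eq_abs, abs_pow]
      exact pow_le_pow_left₀ (abs_nonneg _) (hZB z hz) n
    have h2 : (∫ z, ((T z)^n - (-B)^n) ∂P) = (∫ z, (T z)^n ∂P) - (-B)^n := by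
      rw [integral_sub hTn (integrable_const _), integral_const]
      simp
    rw [← h2]
    apply tendsto_integral_of_dominated_convergence (fun _ => (n:ℝ) * B^(n-1) * (2*B))
    · exact fun k => ((hint k P).integral_prod_left).aestronglyMeasurable
    · exact integrable_const _
    · intro k
      refine Eventually.of_forall fun z => ?_
      have := hinner_bdd k z
      simpa [mul_assoc] using this
    · filter_upwards [haeZ] with z hz
      exact tendsto_layercake hB hn (hZB z hz)
  -- conclusion
  have hdiff := ((hlim P₀ hP₀).sub (hlim P₁ hP₁)).abs
  have hfin := le_of_tendsto hdiff (Eventually.of_forall hdk)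
  have heq : |((∫ z, (T z)^n ∂P₀) - (-B)^n) - ((∫ z, (T z)^n ∂P₁) - (-B)^n)|
      = |(∫ z, (T z)^n ∂P₀) - ∫ z, (T z)^n ∂P₁| := by
    congr 1
    ring
  rw [heq] at hfin
  have hconst : ((n:ℝ) * B^(n-1) * ε) * (2*B) = 2 * n * B^n * ε := by
    have hBn : B^(n-1) * B = B^n := by
      rw [← pow_succ, Nat.sub_add_cancel hn]
    calc ((n:ℝ) * B^(n-1) * ε) * (2*B) = 2 * n * (B^(n-1) * B) * ε := by ring
      _ = 2 * n * B^n * ε := by rw [hBn]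
  rw [hconst] at hfin
  exact hfin

/-- for a bounded set `Z ⊂ ℝ^m` there exist constants `c₁, c₂ > 0`, not
depending on `ε` or the multi-index, such that for all Borel probability measures
`P₀, P₁` supported on `Z` with `d_sig(P₀,P₁) < ε`, every moment difference satisfies
`|∫ z^r dP₀ - ∫ z^r dP₁| < c₁ c₂^{|r|₁} ε`. -/
theorem moment_bound_of_sigmoidIPM_lt {m : ℕ}
    (Z : Set (Fin m → ℝ)) (hZ : Bornology.IsBounded Z) :
    ∃ c₁ c₂ : ℝ, 0 < c₁ ∧ 0 < c₂ ∧
      ∀ (P₀ P₁ : Measure (Fin m → ℝ)),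
        IsProbabilityMeasure P₀ → IsProbabilityMeasure P₁ →
        P₀ Zᶜ = 0 → P₁ Zᶜ = 0 →
        ∀ ε : ℝ, 0 < ε → sigmoidIPM P₀ P₁ < ε →
          ∀ r : Fin m → ℕ,
            |(∫ z, ∏ i, z i ^ r i ∂P₀) - ∫ z, ∏ i, z i ^ r i ∂P₁| <
              c₁ * c₂ ^ (∑ i, r i) * ε := by
  classical
  obtain ⟨R, hR⟩ := hZ.subset_closedBall 0
  set ρ : ℝ := |R| + 1 with hρ
  have hρpos : 0 < ρ := by positivity
  have hcoord : ∀ z ∈ Z, ∀ i, |z i| ≤ ρ := by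
    intro z hz i
    have h1 : ‖z‖ ≤ R := by
      have := hR hz
      rwa [Metric.mem_closedBall, dist_zero_right] at this
    calc |z i| = ‖z i‖ := rfl
      _ ≤ ‖z‖ := norm_le_pi_norm z i
      _ ≤ R := h1
      _ ≤ ρ := by rw [hρ]; cases abs_cases R <;> linarith
  refine ⟨3, 4 * Real.exp 1 * ((m : ℝ) * ρ + 1), by norm_num, by positivity, ?_⟩
  intro P₀ P₁ hprob₀ hprob₁ hP₀ hP₁ ε hε hd r
  haveI := hprob₀; haveI := hprob₁
  set c₂ : ℝ := 4 * Real.exp 1 * ((m : ℝ) * ρ + 1) with hc₂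
  have hc₂pos : 0 < c₂ := by rw [hc₂]; positivity
  set n := ∑ i, r i with hn
  rcases Nat.eq_zero_or_pos n with hn0 | hn1
  · -- n = 0 : the monomial is constant 1
    have hsum0 : ∑ i, r i = 0 := by rw [← hn]; exact hn0
    have hr : ∀ i, r i = 0 := fun i =>
      Finset.sum_eq_zero_iff.mp hsum0 i (Finset.mem_univ i)
    have hone : ∀ z : Fin m → ℝ, (∏ i, z i ^ r i) = 1 := by
      intro z
      rw [Finset.prod_eq_one]
      intro i _
      rw [hr i, pow_zero]
    simp_rw [hone]
    rw [integral_const, integral_const]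
    simp only [measure_univ, probReal_univ, ENNReal.toReal_one, smul_eq_mul, one_mul, sub_self, abs_zero]
    rw [hn0, pow_zero]
    linarith
  · -- n ≥ 1
    set ι := (i : Fin m) × Fin (r i) with hι
    have hcard : Fintype.card ι = n := by
      show Fintype.card ((i : Fin m) × Fin (r i)) = n
      rw [hn]
      simp
    -- the coefficient vector attached to a subset S
    set θS : Finset ι → Fin m → ℝ :=
      fun S i => ((S.filter (fun j => j.1 = i)).card : ℝ) with hθS
    have hθS_le : ∀ (S : Finset ι) (i : Fin m), θS S i ≤ (n : ℝ) := by
      intro S i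
      show ((S.filter (fun j => j.1 = i)).card : ℝ) ≤ (n : ℝ)
      have h1 : (S.filter (fun j => j.1 = i)).card ≤ S.card := Finset.card_filter_le _ _
      have h2 : S.card ≤ Fintype.card ι := Finset.card_le_univ S
      exact_mod_cast le_trans h1 (le_trans h2 (le_of_eq hcard))
    have hθS_nonneg : ∀ (S : Finset ι) (i : Fin m), 0 ≤ θS S i := by
      intro S i
      show (0:ℝ) ≤ ((S.filter (fun j => j.1 = i)).card : ℝ)
      positivity
    -- pointwise polarization identity
    have hpoint : ∀ z : Fin m → ℝ, (∏ i, z i ^ r i)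
        = (Nat.factorial n : ℝ)⁻¹ * ∑ S : Finset ι,
            (-1 : ℝ)^(n - S.card) * (∑ i, θS S i * z i)^n := by
      intro z
      have h := polarization (ι := ι) (fun j => z j.1)
      rw [hcard] at h
      have hprod : (∏ j : ι, z j.1) = ∏ i, z i ^ r i := by
        rw [← Finset.univ_sigma_univ, Finset.prod_sigma]
        exact Finset.prod_congr rfl fun i _ => by simp
      have hsum : ∀ S : Finset ι, (∑ j ∈ S, z j.1) = ∑ i, θS S i * z i := by
        intro S
        rw [← Finset.sum_fiberwise S (fun j => j.1) (fun j => z j.1)]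
        refine Finset.sum_congr rfl fun i _ => ?_
        have : ∀ j ∈ S.filter (fun j => j.1 = i), z j.1 = z i := by
          intro j hj
          rw [(Finset.mem_filter.mp hj).2]
        rw [Finset.sum_congr rfl this, Finset.sum_const, nsmul_eq_mul, hθS]
      have h2 := h.trans (Finset.sum_congr rfl fun S _ => by rw [hsum S])
      rw [hprod] at h2
      have hfac : (Nat.factorial n : ℝ) ≠ 0 := by
        exact_mod_cast Nat.factorial_ne_zero n
      rw [← h2, inv_mul_cancel_left₀ hfac]
    -- bound for each linear functional
    set B : ℝ := (n : ℝ) * ((m : ℝ) * ρ) + 1 with hB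
    have hBpos : 0 < B := by rw [hB]; positivity
    have hZB : ∀ (S : Finset ι), ∀ z ∈ Z, |∑ i, θS S i * z i| ≤ B := by
      intro S z hz
      calc |∑ i, θS S i * z i| ≤ ∑ i, |θS S i * z i| := Finset.abs_sum_le_sum_abs _ _
        _ ≤ ∑ _i : Fin m, (n : ℝ) * ρ := by
            refine Finset.sum_le_sum fun i _ => ?_
            rw [abs_mul, abs_of_nonneg (hθS_nonneg S i)]
            exact mul_le_mul (hθS_le S i) (hcoord z hz i) (abs_nonneg _) (Nat.cast_nonneg n)
        _ = (m : ℝ) * ((n:ℝ) * ρ) := by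
            rw [Finset.sum_const, Finset.card_univ, Fintype.card_fin, nsmul_eq_mul]
        _ ≤ B := by rw [hB]; ring_nf; linarith
    -- integrability of the power integrands
    have hIθ : ∀ (S : Finset ι) (P : Measure (Fin m → ℝ)) [IsProbabilityMeasure P], P Zᶜ = 0 →
        Integrable (fun z => (∑ i, θS S i * z i)^n) P := by
      intro S P hP hPZ
      have haeZ : ∀ᵐ z ∂P, z ∈ Z := by rw [ae_iff]; exact hPZ
      have hc : Continuous fun z : Fin m → ℝ => (∑ i, θS S i * z i)^n :=
        (continuous_finset_sum _ fun i _ => continuous_const.mul (continuous_apply i)).pow n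
      refine Integrable.mono' (integrable_const (B^n)) hc.aestronglyMeasurable ?_
      filter_upwards [haeZ] with z hz
      rw [Real.norm_eq_abs, abs_pow]
      exact pow_le_pow_left₀ (abs_nonneg _) (hZB S z hz) n
    -- expand the moment integrals
    have hexp : ∀ (P : Measure (Fin m → ℝ)) [IsProbabilityMeasure P], P Zᶜ = 0 →
        (∫ z, ∏ i, z i ^ r i ∂P) = (Nat.factorial n : ℝ)⁻¹ *
          ∑ S : Finset ι, (-1 : ℝ)^(n - S.card) * ∫ z, (∑ i, θS S i * z i)^n ∂P := by
      intro P hP hPZ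
      simp_rw [hpoint]
      rw [MeasureTheory.integral_const_mul]
      congr 1
      rw [integral_finset_sum _ (fun S _ => ((hIθ S P hPZ).const_mul _))]
      exact Finset.sum_congr rfl fun S _ => MeasureTheory.integral_const_mul _ _
    rw [hexp P₀ hP₀, hexp P₁ hP₁, ← mul_sub, ← Finset.sum_sub_distrib]
    -- bound each summand via pow_moment_bound
    have hterm : ∀ S : Finset ι,
        |(-1 : ℝ)^(n - S.card) * (∫ z, (∑ i, θS S i * z i)^n ∂P₀)
          - (-1 : ℝ)^(n - S.card) * ∫ z, (∑ i, θS S i * z i)^n ∂P₁| ≤ 2 * n * B^n * ε := by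
      intro S
      rw [← mul_sub, abs_mul, abs_pow, abs_neg, abs_one, one_pow, one_mul]
      exact pow_moment_bound P₀ P₁ hP₀ hP₁ (θS S) hBpos (hZB S) hn1 hε hd
    have habs : |(Nat.factorial n : ℝ)⁻¹ * ∑ S : Finset ι,
          ((-1 : ℝ)^(n - S.card) * (∫ z, (∑ i, θS S i * z i)^n ∂P₀)
            - (-1 : ℝ)^(n - S.card) * ∫ z, (∑ i, θS S i * z i)^n ∂P₁)|
        ≤ (Nat.factorial n : ℝ)⁻¹ * (2^n * (2 * n * B^n * ε)) := by
      rw [abs_mul, abs_of_nonneg (by positivity : (0:ℝ) ≤ (Nat.factorial n : ℝ)⁻¹)]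
      refine mul_le_mul_of_nonneg_left ?_ (by positivity)
      calc |∑ S : Finset ι, _| ≤ ∑ S : Finset ι, (2 * n * B^n * ε) :=
            le_trans (Finset.abs_sum_le_sum_abs _ _) (Finset.sum_le_sum fun S _ => hterm S)
        _ = 2^n * (2 * n * B^n * ε) := by
            rw [Finset.sum_const, Finset.card_univ, Fintype.card_finset, hcard, nsmul_eq_mul]
            push_cast
            ring
    refine lt_of_le_of_lt habs ?_
    -- final arithmetic
    have hnfacpos : (0:ℝ) < (Nat.factorial n : ℝ) := by
      exact_mod_cast Nat.factorial_pos n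
    have hn2 : (n : ℝ) ≤ 2^n := by
      exact_mod_cast le_of_lt (Nat.lt_two_pow_self (n := n))
    have hnn : (n:ℝ)^n ≤ (Nat.factorial n : ℝ) * (Real.exp 1)^n := by
      have h1 : ((n:ℝ))^n / (Nat.factorial n : ℝ) ≤ Real.exp (n : ℝ) := by
        have h2 := Real.sum_le_exp_of_nonneg (x := (n:ℝ)) (Nat.cast_nonneg n) (n+1)
        refine le_trans ?_ h2
        have h3 : ((n:ℝ))^n / (Nat.factorial n : ℝ) = (n:ℝ)^n / (Nat.factorial n) := rfl
        exact Finset.single_le_sum (f := fun i => (n:ℝ)^i / (Nat.factorial i))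
          (fun i _ => by positivity) (Finset.self_mem_range_succ n)
      have h4 : Real.exp ((n:ℝ)) = (Real.exp 1)^n := by
        rw [← Real.exp_nat_mul, mul_one]
      rw [h4] at h1
      calc (n:ℝ)^n = ((n:ℝ)^n / (Nat.factorial n : ℝ)) * (Nat.factorial n : ℝ) := by
            field_simp
        _ ≤ (Real.exp 1)^n * (Nat.factorial n : ℝ) :=
            mul_le_mul_of_nonneg_right h1 (le_of_lt hnfacpos)
        _ = (Nat.factorial n : ℝ) * (Real.exp 1)^n := by ring
    have hBle : B ≤ (n:ℝ) * ((m:ℝ) * ρ + 1) := by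
      rw [hB]
      have : (1:ℝ) ≤ (n:ℝ) := by exact_mod_cast hn1
      nlinarith
    have hBn : B^n ≤ (Nat.factorial n : ℝ) * (Real.exp 1)^n * ((m:ℝ)*ρ+1)^n := by
      calc B^n ≤ ((n:ℝ) * ((m:ℝ)*ρ+1))^n := by
            apply pow_le_pow_left₀ (le_of_lt hBpos) hBle
        _ = (n:ℝ)^n * ((m:ℝ)*ρ+1)^n := mul_pow _ _ _
        _ ≤ ((Nat.factorial n : ℝ) * (Real.exp 1)^n) * ((m:ℝ)*ρ+1)^n := by
            refine mul_le_mul_of_nonneg_right hnn (by positivity)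
    have hc₂n : c₂^n = 2^n * 2^n * (Real.exp 1)^n * ((m:ℝ)*ρ+1)^n := by
      have : c₂ = 2 * 2 * Real.exp 1 * ((m:ℝ)*ρ+1) := by rw [hc₂]; ring
      rw [this, mul_pow, mul_pow, mul_pow]
    have hfinal : (Nat.factorial n : ℝ)⁻¹ * (2^n * (2 * n * B^n * ε)) ≤ 2 * c₂^n * ε := by
      have h5 : (Nat.factorial n : ℝ)⁻¹ * (2^n * (2 * n * B^n * ε))
          ≤ (Nat.factorial n : ℝ)⁻¹ * (2^n * (2 * 2^n *
              ((Nat.factorial n : ℝ) * (Real.exp 1)^n * ((m:ℝ)*ρ+1)^n) * ε)) := by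
        refine mul_le_mul_of_nonneg_left ?_ (by positivity)
        refine mul_le_mul_of_nonneg_left ?_ (by positivity)
        refine mul_le_mul_of_nonneg_right ?_ (le_of_lt hε)
        have hstep : 2 * (n:ℝ) * B^n
            ≤ 2 * 2^n * ((Nat.factorial n : ℝ) * (Real.exp 1)^n * ((m:ℝ)*ρ+1)^n) := by
          refine mul_le_mul ?_ hBn (by positivity) (by positivity)
          have : (2:ℝ) * n ≤ 2 * 2^n := by nlinarith [hn2]
          exact this
        exact hstep
      refine le_trans h5 (le_of_eq ?_)
      rw [hc₂n]
      field_simp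
    refine lt_of_le_of_lt hfinal ?_
    have : 0 < c₂^n * ε := by positivity
    linarith
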